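/- arXiv:2010.08878 — 7 statements merged into one kernel-verified Lean document; each statement's English description precedes it below -/
import Mathlib

section
/- Let G be a finite simple graph without isolated vertices and suppose that, for some integer k ≥ 2, the ideal J(G)^{(k)} is generated in a single degree. Then J(G) is generated in a single degree, say d; in particular, all minimal vertex covers of G have cardinality d (so G is unmixed) and every minimal monomial generator of J(G)^{(k)} has degree k·d. -/
open MvPolynomial

/-- `C` is a vertex cover of `G`: every edge is incident to a vertex of `C`. -/
def IsVertexCover {V : Type*} (G : SimpleGraph V) (C : Set V) : Prop :=
  ∀ ⦃a b : V⦄, G.Adj a b → a ∈ C ∨ b ∈ C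

/-- `C` is a minimal vertex cover of `G`. -/
def IsMinVertexCover {V : Type*} (G : SimpleGraph V) (C : Set V) : Prop :=
  IsVertexCover G C ∧ ∀ D : Set V, D ⊂ C → ¬ IsVertexCover G D

/-- `A` is an independent set of `G`. -/
def IsIndepSet {V : Type*} (G : SimpleGraph V) (A : Set V) : Prop :=
  ∀ ⦃a⦄, a ∈ A → ∀ ⦃b⦄, b ∈ A → ¬ G.Adj a b

/-- `A` is a maximal independent set of `G`. -/
def IsMaxIndepSet {V : Type*} (G : SimpleGraph V) (A : Set V) : Prop :=
  IsIndepSet G A ∧ ∀ B : Set V, IsIndepSet G B → A ⊆ B → A = B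

/-- A graph is unmixed if all maximal independent sets have the same cardinality. -/
def Unmixed {V : Type*} (G : SimpleGraph V) : Prop :=
  ∀ A B : Set V, IsMaxIndepSet G A → IsMaxIndepSet G B → A.ncard = B.ncard

/-- `G` has no isolated vertices. -/
def HasNoIsolatedVertex {V : Type*} (G : SimpleGraph V) : Prop :=
  ∀ v : V, ∃ w : V, G.Adj v w

/-- `G` is very well-covered: no isolated vertices, an even number of vertices, and every
maximal independent set has cardinality half the number of vertices. -/
def VeryWellCovered {V : Type*} [Fintype V] (G : SimpleGraph V) : Prop :=
  HasNoIsolatedVertex G ∧ Even (Fintype.card V) ∧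
    ∀ A : Set V, IsMaxIndepSet G A → 2 * A.ncard = Fintype.card V

/-- `G` is claw-free: it has no induced subgraph isomorphic to `K_{1,3}`. -/
def ClawFree {V : Type*} (G : SimpleGraph V) : Prop :=
  ¬ ∃ a b c d : V, G.Adj a b ∧ G.Adj a c ∧ G.Adj a d ∧
      ¬ G.Adj b c ∧ ¬ G.Adj b d ∧ ¬ G.Adj c d ∧ b ≠ c ∧ b ≠ d ∧ c ≠ d

/-- The graph obtained from `G` by deleting the vertices in `A`: it has the same vertex set,
and its edges are the edges of `G` avoiding `A` (so the vertices of `A` become isolated). -/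
def deleteVerts {V : Type*} (G : SimpleGraph V) (A : Set V) : SimpleGraph V where
  Adj a b := G.Adj a b ∧ a ∉ A ∧ b ∉ A
  symm := ⟨fun a b ⟨h1, h2, h3⟩ => ⟨h1.symm, h3, h2⟩⟩
  loopless := ⟨fun a h => G.loopless.irrefl a h.1⟩

/-- The closed neighborhood `N_G[F]` of a set of vertices `F`. -/
def closedNbhdSet {V : Type*} (G : SimpleGraph V) (F : Set V) : Set V :=
  ⋃ a ∈ F, insert a (G.neighborSet a)

/-- The cover ideal `J(G)` of the graph `G`:
the intersection of the ideals `(x_i, x_j)` over the edges `{x_i, x_j}` of `G`. -/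
noncomputable def coverIdeal (K : Type*) [Field K] {V : Type*} (G : SimpleGraph V) :
    Ideal (MvPolynomial V K) :=
  ⨅ (p : V × V) (_ : G.Adj p.1 p.2), Ideal.span {X p.1, X p.2}

/-- The `k`-th symbolic power `J(G)^{(k)}` of the cover ideal of `G`:
the intersection of the ideals `(x_i, x_j)^k` over the edges `{x_i, x_j}` of `G`
(the empty intersection being the unit ideal). -/
noncomputable def symbPow (K : Type*) [Field K] {V : Type*} (G : SimpleGraph V) (k : ℕ) :
    Ideal (MvPolynomial V K) :=
  ⨅ (p : V × V) (_ : G.Adj p.1 p.2), Ideal.span {X p.1, X p.2} ^ k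

/-- The degree of a monomial with exponent vector `m`. -/
def mdeg {V : Type*} (m : V →₀ ℕ) : ℕ := m.sum fun _ e => e

/-- The monomial with exponent vector `m` is a minimal monomial generator of `I`. -/
def IsMinGen {K : Type*} [Field K] {V : Type*} (I : Ideal (MvPolynomial V K)) (m : V →₀ ℕ) :
    Prop :=
  (monomial m (1 : K)) ∈ I ∧
    ∀ i : V, m i ≠ 0 → (monomial (m - Finsupp.single i 1) (1 : K)) ∉ I

/-- `deg I`: the maximum degree of a minimal monomial generator of `I`. -/
noncomputable def genDeg {K : Type*} [Field K] {V : Type*} (I : Ideal (MvPolynomial V K)) : ℕ :=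
  sSup {d : ℕ | ∃ m : V →₀ ℕ, IsMinGen I m ∧ mdeg m = d}


lemma edge_pow_mem {V K : Type*} [Field K] {i j : V} (hij : i ≠ j) (m : V →₀ ℕ) (k : ℕ)
    (h : k ≤ m i + m j) :
    (monomial m (1 : K)) ∈ (Ideal.span {X i, X j} : Ideal (MvPolynomial V K)) ^ k := by
  classical
  set a := min (m i) k with ha
  set b := k - a with hb
  have hai : a ≤ m i := min_le_left _ _
  have hbj : b ≤ m j := by omega
  have hab : a + b = k := by omega
  set u : V →₀ ℕ := Finsupp.single i a + Finsupp.single j b with hu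
  have hum : u ≤ m := by
    rw [Finsupp.le_def]
    intro v
    by_cases hvi : v = i
    · subst hvi
      simp [hu, Finsupp.single_apply, hij, (Ne.symm hij), hai]
    · by_cases hvj : v = j
      · subst hvj
        simp [hu, Finsupp.single_apply, hij, Ne.symm hij, hvi, hbj]
      · simp [hu, Finsupp.single_apply, Ne.symm hvi, Ne.symm hvj]
  have key : (monomial u (1 : K)) ∈ (Ideal.span {X i, X j} : Ideal (MvPolynomial V K)) ^ k := by
    have heq : (monomial u (1 : K)) = X i ^ a * X j ^ b := by
      rw [X_pow_eq_monomial, X_pow_eq_monomial, monomial_mul, one_mul]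
    rw [heq, ← hab, pow_add]
    exact Ideal.mul_mem_mul
      (Ideal.pow_mem_pow (Ideal.subset_span (by simp)) a)
      (Ideal.pow_mem_pow (Ideal.subset_span (by simp)) b)
  have heq2 : (monomial m (1 : K)) = monomial (m - u) (1 : K) * monomial u (1 : K) := by
    rw [monomial_mul, one_mul, tsub_add_cancel_of_le hum]
  rw [heq2]
  exact Ideal.mul_mem_left _ _ key

lemma edge_pow_mem_le {V K : Type*} [Fintype V] [Field K] {i j : V} (hij : i ≠ j)
    (m : V →₀ ℕ) (k : ℕ)
    (h : (monomial m (1 : K)) ∈ (Ideal.span {X i, X j} : Ideal (MvPolynomial V K)) ^ k) :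
    k ≤ m i + m j := by
  classical
  set f : V → Polynomial K := fun v => if v = i ∨ v = j then Polynomial.X else 1 with hf
  set φ : MvPolynomial V K →ₐ[K] Polynomial K := aeval f with hφ
  have him : φ (monomial m (1 : K)) ∈
      Ideal.map φ.toRingHom (Ideal.span {X i, X j} ^ k) :=
    Ideal.mem_map_of_mem _ h
  rw [Ideal.map_pow, Ideal.map_span] at him
  have himg : (φ.toRingHom '' {X i, X j} : Set (Polynomial K)) = {Polynomial.X} := by
    rw [Set.image_insert_eq, Set.image_singleton]
    have h1 : φ.toRingHom (X i) = Polynomial.X := by simp [hφ, hf]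
    have h2 : φ.toRingHom (X j) = Polynomial.X := by simp [hφ, hf]
    rw [h1, h2, Set.pair_eq_singleton]
  rw [himg, Ideal.span_singleton_pow, Ideal.mem_span_singleton] at him
  have hcomp : φ (monomial m (1 : K)) = Polynomial.X ^ (m i + m j) := by
    rw [aeval_monomial, map_one, one_mul]
    rw [Finsupp.prod_fintype _ _ (fun v => pow_zero _)]
    have step : ∀ v : V, f v ^ m v = Polynomial.X ^ (if v ∈ ({i, j} : Finset V) then m v else 0) := by
      intro v
      by_cases hv : v = i ∨ v = j
      · simp [hf, hv, Finset.mem_insert, Finset.mem_singleton]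
      · push_neg at hv
        simp [hf, hv, Finset.mem_insert, Finset.mem_singleton, hv.1, hv.2]
    rw [Finset.prod_congr rfl (fun v _ => step v), Finset.prod_pow_eq_pow_sum]
    congr 1
    rw [Finset.sum_ite_mem, Finset.univ_inter, Finset.sum_pair hij]
  rw [hcomp] at him
  by_contra hlt
  push_neg at hlt
  have := Polynomial.X_pow_dvd_iff.mp him (m i + m j) hlt
  simp [Polynomial.coeff_X_pow] at this
lemma mem_symbPow_iff {V : Type*} [Fintype V] (K : Type*) [Field K] (G : SimpleGraph V)
    (k : ℕ) (m : V →₀ ℕ) :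
    (monomial m (1 : K)) ∈ symbPow K G k ↔ ∀ a b : V, G.Adj a b → k ≤ m a + m b := by
  rw [symbPow]
  simp only [Ideal.mem_iInf]
  constructor
  · intro h a b hab
    exact edge_pow_mem_le hab.ne m k (h (a, b) hab)
  · intro h p hp
    exact edge_pow_mem hp.ne m k (h p.1 p.2 hp)

lemma mem_coverIdeal_iff {V : Type*} [Fintype V] (K : Type*) [Field K] (G : SimpleGraph V)
    (m : V →₀ ℕ) :
    (monomial m (1 : K)) ∈ coverIdeal K G ↔ ∀ a b : V, G.Adj a b → 1 ≤ m a + m b := by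
  have : coverIdeal K G = symbPow K G 1 := by
    rw [coverIdeal, symbPow]
    simp [pow_one]
  rw [this, mem_symbPow_iff]
open scoped Classical in
noncomputable def coverFinsupp {V : Type*} [Fintype V] (C : Set V) (k : ℕ) : V →₀ ℕ :=
  Finsupp.onFinset Finset.univ (fun v => if v ∈ C then k else 0) (fun _ _ => Finset.mem_univ _)

lemma coverFinsupp_apply_of_mem {V : Type*} [Fintype V] {C : Set V} (k : ℕ) {v : V}
    (hv : v ∈ C) : coverFinsupp C k v = k := by
  simp [coverFinsupp, hv]

lemma coverFinsupp_apply_of_not_mem {V : Type*} [Fintype V] {C : Set V} (k : ℕ) {v : V}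
    (hv : v ∉ C) : coverFinsupp C k v = 0 := by
  simp [coverFinsupp, hv]

lemma mdeg_coverFinsupp {V : Type*} [Fintype V] (C : Set V) (k : ℕ) :
    mdeg (coverFinsupp C k) = k * C.ncard := by
  classical
  rw [mdeg, Finsupp.sum_fintype _ _ (fun _ => rfl)]
  have : ∀ v : V, coverFinsupp C k v = if v ∈ C.toFinset then k else 0 := by
    intro v
    by_cases hv : v ∈ C
    · rw [coverFinsupp_apply_of_mem k hv, if_pos (Set.mem_toFinset.mpr hv)]
    · rw [coverFinsupp_apply_of_not_mem k hv, if_neg (fun h => hv (Set.mem_toFinset.mp h))]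
  rw [Finset.sum_congr rfl (fun v _ => this v), Finset.sum_ite_mem, Finset.univ_inter,
    Finset.sum_const, smul_eq_mul, Set.ncard_eq_toFinset_card']
  ring

lemma exists_minCover {V : Type*} [Fintype V] (G : SimpleGraph V) :
    ∃ C : Set V, IsMinVertexCover G C := by
  classical
  have hex : ∃ n : ℕ, ∃ C : Set V, IsVertexCover G C ∧ C.ncard = n :=
    ⟨(Set.univ : Set V).ncard, Set.univ, fun a b _ => Or.inl trivial, rfl⟩
  obtain ⟨C, hC, hcard⟩ := Nat.find_spec hex
  refine ⟨C, hC, ?_⟩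
  intro D hD hDcov
  have h1 : Nat.find hex ≤ D.ncard := Nat.find_min' _ ⟨D, hDcov, rfl⟩
  have h2 : D.ncard < C.ncard := Set.ncard_lt_ncard hD (Set.toFinite C)
  omega

lemma compl_minCover_of_maxIndep {V : Type*} (G : SimpleGraph V) {A : Set V}
    (hA : IsMaxIndepSet G A) : IsMinVertexCover G Aᶜ := by
  constructor
  · intro a b hab
    by_contra h
    push_neg at h
    exact hA.1 (Set.notMem_compl_iff.mp h.1) (Set.notMem_compl_iff.mp h.2) hab
  · intro D hD hDcov
    have hsub : A ⊆ Dᶜ := fun x hx hxD => (hD.subset hxD : x ∈ Aᶜ) hx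
    have hind : IsIndepSet G Dᶜ := fun a ha b hb hab => (hDcov hab).elim ha hb
    have heq := hA.2 Dᶜ hind hsub
    have : D = Aᶜ := by rw [heq, compl_compl]
    exact hD.ne this
/-- a minimal vertex cover gives a minimal generator of the k-th symbolic power -/
lemma isMinGen_symbPow {V : Type*} [Fintype V] (K : Type*) [Field K] (G : SimpleGraph V)
    {C : Set V} (hC : IsMinVertexCover G C) {k : ℕ} (hk : k ≠ 0) :
    IsMinGen (symbPow K G k) (coverFinsupp C k) := by
  constructor
  · rw [mem_symbPow_iff]
    intro a b hab
    rcases hC.1 hab with h | h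
    · rw [coverFinsupp_apply_of_mem k h]; omega
    · rw [coverFinsupp_apply_of_mem k h]; omega
  · intro i hi
    have hiC : i ∈ C := by
      by_contra h
      exact hi (coverFinsupp_apply_of_not_mem k h)
    rw [mem_symbPow_iff]
    intro hmem
    have hsub : C \ {i} ⊂ C := Set.sdiff_singleton_ssubset.mpr hiC
    have := hC.2 _ hsub
    rw [IsVertexCover] at this
    push_neg at this
    obtain ⟨a, b, hab, ha, hb⟩ := this
    have hab' := hmem a b hab
    rcases hC.1 hab with h | h
    · have hai : a = i := by
        by_contra h'
        exact ha ⟨h, h'⟩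
      subst hai
      have hbi : a ≠ b := hab.ne
      have hbC : b ∉ C := fun h' => hb ⟨h', fun h'' => hbi ((h'' : b = a)).symm⟩
      rw [Finsupp.tsub_apply, Finsupp.tsub_apply, coverFinsupp_apply_of_mem k h,
        coverFinsupp_apply_of_not_mem k hbC, Finsupp.single_eq_same] at hab'
      omega
    · have hbi : b = i := by
        by_contra h'
        exact hb ⟨h, h'⟩
      subst hbi
      have hai : a ≠ b := hab.ne
      have haC : a ∉ C := fun h' => ha ⟨h', fun h'' => hai (h'' : a = b)⟩
      rw [Finsupp.tsub_apply, Finsupp.tsub_apply, coverFinsupp_apply_of_mem k h,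
        coverFinsupp_apply_of_not_mem k haC, Finsupp.single_eq_same] at hab'
      omega

/-- any minimal generator of the cover ideal is the indicator of a minimal vertex cover -/
lemma minCover_of_isMinGen {V : Type*} [Fintype V] (K : Type*) [Field K] (G : SimpleGraph V)
    {m : V →₀ ℕ} (hm : IsMinGen (coverIdeal K G) m) :
    IsMinVertexCover G {v | m v ≠ 0} ∧ mdeg m = ({v | m v ≠ 0} : Set V).ncard := by
  classical
  have hmem := (mem_coverIdeal_iff K G m).mp hm.1
  set C : Set V := {v | m v ≠ 0} with hCdef
  have hcov : IsVertexCover G C := by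
    intro a b hab
    have := hmem a b hab
    by_contra h
    push_neg at h
    have ha : m a = 0 := not_not.mp h.1
    have hb : m b = 0 := not_not.mp h.2
    omega
  -- each i ∈ C yields an edge showing C \ {i} is not a cover, and m i = 1
  have key : ∀ i : V, m i ≠ 0 → m i = 1 ∧ ¬ IsVertexCover G (C \ {i}) := by
    intro i hi
    have hni := hm.2 i hi
    rw [mem_coverIdeal_iff] at hni
    push_neg at hni
    obtain ⟨a, b, hab, hab'⟩ := hni
    rw [Finsupp.tsub_apply, Finsupp.tsub_apply] at hab'
    have hcov' := hmem a b hab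
    have hne : a ≠ b := hab.ne
    by_cases hia : i = a
    · subst hia
      rw [Finsupp.single_eq_same, Finsupp.single_eq_of_ne' hne] at hab'
      have hmb : m b = 0 := by omega
      refine ⟨by omega, ?_⟩
      intro hcc
      rcases hcc hab with h | h
      · exact h.2 rfl
      · exact h.1 hmb
    · by_cases hib : i = b
      · subst hib
        rw [Finsupp.single_eq_same, Finsupp.single_eq_of_ne' (Ne.symm hne)] at hab'
        have hma : m a = 0 := by omega
        refine ⟨by omega, ?_⟩
        intro hcc
        rcases hcc hab with h | h
        · exact h.1 hma
        · exact h.2 rfl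
      · rw [Finsupp.single_eq_of_ne' hia, Finsupp.single_eq_of_ne' hib] at hab'
        omega
  have hminco : IsMinVertexCover G C := by
    refine ⟨hcov, ?_⟩
    intro D hD hDcov
    obtain ⟨i, hiC, hiD⟩ := Set.exists_of_ssubset hD
    have hsub : D ⊆ C \ {i} := fun x hx => ⟨hD.subset hx, fun h => hiD (h ▸ hx)⟩
    exact (key i hiC).2 (fun a b hab => (hDcov hab).imp (fun h => hsub h) (fun h => hsub h))
  refine ⟨hminco, ?_⟩
  -- mdeg m = ncard C since all values are 0 or 1
  have : mdeg m = ∑ v ∈ m.support, m v := rfl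
  rw [this, Finset.sum_congr rfl (fun v hv => (key v (Finsupp.mem_support_iff.mp hv)).1),
      Finset.sum_const, smul_eq_mul, mul_one]
  have : C = ↑m.support := by
    ext v; simp [hCdef, Finsupp.mem_support_iff]
  rw [this, Set.ncard_coe_finset]

/-- from the proof of Lemma `singdeg`: if `G` has no isolated vertices and
`J(G)^{(k)}` is generated in a single degree for some `k ≥ 2`, then `J(G)` is generated in a
single degree `d`; in particular all minimal vertex covers of `G` have cardinality `d` (so
`G` is unmixed) and every minimal monomial generator of `J(G)^{(k)}` has degree `k * d`. -/

theorem statement7 {V : Type*} [Fintype V] (K : Type*) [Field K] (G : SimpleGraph V)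
    (hiso : HasNoIsolatedVertex G) (k : ℕ) (hk : 2 ≤ k)
    (hsingle : ∀ m m' : V →₀ ℕ, IsMinGen (symbPow K G k) m → IsMinGen (symbPow K G k) m' →
      mdeg m = mdeg m') :
    ∃ d : ℕ,
      (∀ m : V →₀ ℕ, IsMinGen (coverIdeal K G) m → mdeg m = d) ∧
      (∀ C : Set V, IsMinVertexCover G C → C.ncard = d) ∧
      Unmixed G ∧
      (∀ m : V →₀ ℕ, IsMinGen (symbPow K G k) m → mdeg m = k * d) := by
  classical
  obtain ⟨C₀, hC₀⟩ := exists_minCover G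
  set d := C₀.ncard with hd
  have hk0 : k ≠ 0 := by omega
  have hC₀gen := isMinGen_symbPow K G hC₀ hk0
  have part2 : ∀ C : Set V, IsMinVertexCover G C → C.ncard = d := by
    intro C hC
    have h := hsingle _ _ (isMinGen_symbPow K G hC hk0) hC₀gen
    rw [mdeg_coverFinsupp, mdeg_coverFinsupp] at h
    exact Nat.eq_of_mul_eq_mul_left (by omega) h
  refine ⟨d, ?_, part2, ?_, ?_⟩
  · intro m hm
    obtain ⟨hmc, hdeg⟩ := minCover_of_isMinGen K G hm
    rw [hdeg, part2 _ hmc]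
  · intro A B hA hB
    have h1 := part2 _ (compl_minCover_of_maxIndep G hA)
    have h2 := part2 _ (compl_minCover_of_maxIndep G hB)
    have c1 := Set.ncard_add_ncard_compl A
    have c2 := Set.ncard_add_ncard_compl B
    omega
  · intro m hm
    have h := hsingle m _ hm hC₀gen
    rw [h, mdeg_coverFinsupp]
end

section
/- Let G be an unmixed finite simple graph with n vertices and no isolated vertices. Then every minimal vertex cover of G has cardinality at least n/2; equivalently, every maximal independent set of G has cardinality at most n/2. -/
open MvPolynomial

section StatementEightAux

variable {V : Type*} [Fintype V] {G : SimpleGraph V}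

/-- The set of neighbors of a set of vertices. -/
def NbrSet (G : SimpleGraph V) (U : Set V) : Set V := {x | ∃ u ∈ U, G.Adj x u}

lemma nbrSet_mono {U W : Set V} (h : U ⊆ W) : NbrSet G U ⊆ NbrSet G W :=
  fun _ ⟨u, hu, hadj⟩ => ⟨u, h hu, hadj⟩

lemma indep_insert {U : Set V} {x : V} (hU : IsIndepSet G U)
    (hx : ∀ u ∈ U, ¬ G.Adj x u) : IsIndepSet G (insert x U) := by
  intro a ha b hb hab
  rcases ha with rfl | ha <;> rcases hb with rfl | hb
  · exact G.loopless.irrefl _ hab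
  · exact hx b hb hab
  · exact hx a ha hab.symm
  · exact hU ha hb hab

/-- Extend an independent subset of `T` to a maximal independent subset of `T`. -/
lemma exists_maximal_indep_on (T W : Set V) (hWT : W ⊆ T) (hW : IsIndepSet G W) :
    ∃ U : Set V, W ⊆ U ∧ U ⊆ T ∧ IsIndepSet G U ∧
      ∀ U' : Set V, U' ⊆ T → IsIndepSet G U' → U ⊆ U' → U = U' := by
  obtain ⟨U, hU, hmax⟩ := Set.Finite.exists_maximalFor id
    {U : Set V | W ⊆ U ∧ U ⊆ T ∧ IsIndepSet G U} (Set.toFinite _) ⟨W, subset_rfl, hWT, hW⟩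
  exact ⟨U, hU.1, hU.2.1, hU.2.2,
    fun U' hU'T hU'i hUU' => Set.Subset.antisymm hUU' (hmax ⟨hU.1.trans hUU', hU'T, hU'i⟩ hUU')⟩

/-- A maximal independent subset of `T` dominates `T`. -/
lemma dominates_of_maximal_indep_on {T U : Set V} (hUT : U ⊆ T) (hUi : IsIndepSet G U)
    (hmax : ∀ U' : Set V, U' ⊆ T → IsIndepSet G U' → U ⊆ U' → U = U')
    {t : V} (ht : t ∈ T) (htU : t ∉ U) : ∃ u ∈ U, G.Adj t u := by
  by_contra hno
  push_neg at hno
  have hins : IsIndepSet G (insert t U) := indep_insert hUi hno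
  have := hmax (insert t U) (Set.insert_subset ht hUT) hins (Set.subset_insert _ _)
  exact htU (this ▸ Set.mem_insert t U)

lemma indep_empty : IsIndepSet G (∅ : Set V) :=
  fun a ha => absurd ha (Set.notMem_empty a)

/-- Every independent set extends to a maximal independent set of `G`. -/
lemma exists_maxIndepSet_extension (W : Set V) (hW : IsIndepSet G W) :
    ∃ B : Set V, W ⊆ B ∧ IsMaxIndepSet G B := by
  obtain ⟨U, hWU, _, hUi, hmax⟩ := exists_maximal_indep_on Set.univ W (Set.subset_univ _) hW
  exact ⟨U, hWU, hUi, fun B hBi hUB => hmax B (Set.subset_univ _) hBi hUB⟩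

variable {A : Set V}

/-- For an independent set `U` in the complement of a maximal independent set `A` of an
unmixed graph, `|U| ≤ |A ∩ N(U)|`. -/
lemma card_le_card_nbrs (hG : Unmixed G) (hA : IsMaxIndepSet G A) {U : Set V}
    (hUC : U ⊆ Aᶜ) (hUi : IsIndepSet G U) : U.ncard ≤ (A ∩ NbrSet G U).ncard := by
  have hWi : IsIndepSet G (U ∪ (A \ NbrSet G U)) := by
    intro a ha b hb hab
    rcases ha with ha | ha <;> rcases hb with hb | hb
    · exact hUi ha hb hab
    · exact hb.2 ⟨a, ha, hab.symm⟩
    · exact ha.2 ⟨b, hb, hab⟩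
    · exact hA.1 ha.1 hb.1 hab
  obtain ⟨B, hWB, hB⟩ := exists_maxIndepSet_extension _ hWi
  have hcard : B.ncard = A.ncard := hG B A hB hA
  have hdisj : Disjoint U (A \ NbrSet G U) :=
    Set.disjoint_left.mpr fun x hxU hxd => (hUC hxU) hxd.1
  have h1 : U.ncard + (A \ NbrSet G U).ncard ≤ A.ncard := by
    rw [← Set.ncard_union_eq hdisj, ← hcard]
    exact Set.ncard_le_ncard hWB
  have h2 : (A ∩ NbrSet G U).ncard + (A \ NbrSet G U).ncard = A.ncard :=
    Set.ncard_inter_add_ncard_diff_eq_ncard A _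
  omega

/-- The set of vertices of `A` all of whose neighbors lie in `T`. -/
def ATset (G : SimpleGraph V) (A T : Set V) : Set V := {a ∈ A | ∀ x, G.Adj a x → x ∈ T}

/-- If `U` is a maximal independent subset of `T ⊆ Aᶜ`, then `|A_T ∩ N(U)| ≤ |U|`. -/
lemma card_ATset_nbrs_le (hG : Unmixed G) (hA : IsMaxIndepSet G A) {T U : Set V}
    (hTC : T ⊆ Aᶜ) (hUT : U ⊆ T) (hUi : IsIndepSet G U)
    (hdom : ∀ t ∈ T, t ∉ U → ∃ u ∈ U, G.Adj t u) :
    (ATset G A T ∩ NbrSet G U).ncard ≤ U.ncard := by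
  classical
  set X : Set V := Aᶜ \ (T ∪ NbrSet G U) with hX
  obtain ⟨U', -, hU'X, hU'i, hU'max⟩ :=
    exists_maximal_indep_on (G := G) X ∅ (Set.empty_subset _) indep_empty
  have hU'nT : ∀ u' ∈ U', u' ∉ T := fun u' hu' ht => (hU'X hu').2 (Or.inl ht)
  have hU'nN : ∀ u' ∈ U', u' ∉ NbrSet G U := fun u' hu' hn => (hU'X hu').2 (Or.inr hn)
  set Ub : Set V := U ∪ U' with hUb
  have hUbC : Ub ⊆ Aᶜ := Set.union_subset (hUT.trans hTC) (hU'X.trans Set.diff_subset)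
  have hUbi : IsIndepSet G Ub := by
    intro a ha b hb hab
    rcases ha with ha | ha <;> rcases hb with hb | hb
    · exact hUi ha hb hab
    · exact hU'nN b hb ⟨a, ha, hab.symm⟩
    · exact hU'nN a ha ⟨b, hb, hab⟩
    · exact hU'i ha hb hab
  set B : Set V := Ub ∪ (A \ NbrSet G Ub) with hB
  have hBi : IsIndepSet G B := by
    intro a ha b hb hab
    rcases ha with ha | ha <;> rcases hb with hb | hb
    · exact hUbi ha hb hab
    · exact hb.2 ⟨a, ha, hab.symm⟩
    · exact ha.2 ⟨b, hb, hab⟩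
    · exact hA.1 ha.1 hb.1 hab
  have hBmax : IsMaxIndepSet G B := by
    refine ⟨hBi, fun B' hB'i hBB' => (Set.Subset.antisymm hBB' (fun v hv => ?_))⟩
    by_contra hvB
    have hvNbrs : ∀ u ∈ B, ¬ G.Adj v u := fun u hu hadj => hB'i hv (hBB' hu) hadj
    by_cases hvA : v ∈ A
    · have hvn : v ∈ NbrSet G Ub := by
        by_contra hvn
        exact hvB (Or.inr ⟨hvA, hvn⟩)
      obtain ⟨u, hu, hadj⟩ := hvn
      exact hvNbrs u (Or.inl hu) hadj
    · by_cases hvT : v ∈ T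
      · have hvU : v ∉ U := fun h => hvB (Or.inl (Or.inl h))
        obtain ⟨u, hu, hadj⟩ := hdom v hvT hvU
        exact hvNbrs u (Or.inl (Or.inl hu)) hadj
      · by_cases hvN : v ∈ NbrSet G U
        · obtain ⟨u, hu, hadj⟩ := hvN
          exact hvNbrs u (Or.inl (Or.inl hu)) hadj
        · have hvX : v ∈ X := ⟨hvA, fun h => h.elim hvT hvN⟩
          have hvU' : v ∉ U' := fun h => hvB (Or.inl (Or.inr h))
          obtain ⟨u, hu, hadj⟩ :=
            dominates_of_maximal_indep_on hU'X hU'i hU'max hvX hvU'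
          exact hvNbrs u (Or.inl (Or.inr hu)) hadj
  have hcard : B.ncard = A.ncard := hG B A hBmax hA
  have hdisjUbA : Disjoint Ub (A \ NbrSet G Ub) :=
    Set.disjoint_left.mpr fun x hxU hxd => (hUbC hxU) hxd.1
  have hBsize : Ub.ncard + (A \ NbrSet G Ub).ncard = B.ncard :=
    (Set.ncard_union_eq hdisjUbA).symm
  have hAsplit : (A ∩ NbrSet G Ub).ncard + (A \ NbrSet G Ub).ncard = A.ncard :=
    Set.ncard_inter_add_ncard_diff_eq_ncard A _
  have hdisjUU' : Disjoint U U' :=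
    Set.disjoint_left.mpr fun u hu hu' => (hU'X hu').2 (Or.inl (hUT hu))
  have hUbsize : Ub.ncard = U.ncard + U'.ncard := Set.ncard_union_eq hdisjUU'
  have hS1 : ATset G A T ∩ NbrSet G U ⊆ A ∩ NbrSet G Ub := fun a ha =>
    ⟨ha.1.1, nbrSet_mono Set.subset_union_left ha.2⟩
  have hS2 : A ∩ NbrSet G U' ⊆ A ∩ NbrSet G Ub := fun a ha =>
    ⟨ha.1, nbrSet_mono Set.subset_union_right ha.2⟩
  have hS12 : Disjoint (ATset G A T ∩ NbrSet G U) (A ∩ NbrSet G U') := by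
    rw [Set.disjoint_left]
    rintro a ⟨⟨_, haT⟩, _⟩ ⟨_, u', hu', hadj⟩
    exact hU'nT u' hu' (haT u' hadj)
  have hsum : (ATset G A T ∩ NbrSet G U).ncard + (A ∩ NbrSet G U').ncard
      ≤ (A ∩ NbrSet G Ub).ncard := by
    rw [← Set.ncard_union_eq hS12]
    exact Set.ncard_le_ncard (Set.union_subset hS1 hS2)
  have hF2 : U'.ncard ≤ (A ∩ NbrSet G U').ncard :=
    card_le_card_nbrs hG hA (hU'X.trans Set.diff_subset) hU'i
  omega

/-- For every `T ⊆ Aᶜ`, `|A_T| ≤ |T|`. -/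
lemma card_ATset_le (hG : Unmixed G) (hiso : HasNoIsolatedVertex G)
    (hA : IsMaxIndepSet G A) :
    ∀ (k : ℕ) (T : Set V), T ⊆ Aᶜ → T.ncard ≤ k → (ATset G A T).ncard ≤ T.ncard := by
  intro k
  induction k with
  | zero =>
    intro T hTC hT0
    have hT : T = ∅ := (Set.ncard_eq_zero (Set.toFinite T)).mp (Nat.le_zero.mp hT0)
    subst hT
    have hAT : ATset G A ∅ = ∅ := by
      ext a
      simp only [ATset, Set.mem_setOf_eq, Set.mem_empty_iff_false, iff_false, not_and]
      intro _ haT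
      obtain ⟨w, hw⟩ := hiso a
      exact haT w hw
    rw [hAT]
  | succ k ih =>
    intro T hTC hTk
    rcases Set.eq_empty_or_nonempty T with rfl | ⟨t₀, ht₀⟩
    · have hAT : ATset G A ∅ = ∅ := by
        ext a
        simp only [ATset, Set.mem_setOf_eq, Set.mem_empty_iff_false, iff_false, not_and]
        intro _ haT
        obtain ⟨w, hw⟩ := hiso a
        exact haT w hw
      rw [hAT]
    · have hsing : IsIndepSet G ({t₀} : Set V) := by
        intro a ha b hb hab
        rw [Set.mem_singleton_iff] at ha hb
        subst ha; subst hb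
        exact G.loopless.irrefl _ hab
      obtain ⟨U, ht₀U, hUT, hUi, hUmax⟩ :=
        exists_maximal_indep_on (G := G) T {t₀} (Set.singleton_subset_iff.mpr ht₀) hsing
      have ht₀U' : t₀ ∈ U := ht₀U rfl
      have hdom : ∀ t ∈ T, t ∉ U → ∃ u ∈ U, G.Adj t u := fun t ht htU =>
        dominates_of_maximal_indep_on hUT hUi hUmax ht htU
      have hcover : ATset G A T ⊆ (ATset G A T ∩ NbrSet G U) ∪ ATset G A (T \ U) := by
        intro a ha
        by_cases haN : a ∈ NbrSet G U
        · exact Or.inl ⟨ha, haN⟩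
        · refine Or.inr ⟨ha.1, fun x hx => ⟨ha.2 x hx, fun hxU => haN ⟨x, hxU, hx⟩⟩⟩
      have h1 : (ATset G A T ∩ NbrSet G U).ncard ≤ U.ncard :=
        card_ATset_nbrs_le hG hA hTC hUT hUi hdom
      have hTUss : T \ U ⊂ T := ⟨Set.diff_subset, fun h => (h ht₀).2 ht₀U'⟩
      have hlt : (T \ U).ncard < T.ncard := Set.ncard_lt_ncard hTUss
      have h2 : (ATset G A (T \ U)).ncard ≤ (T \ U).ncard :=
        ih (T \ U) ((Set.diff_subset).trans hTC) (by omega)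
      have h3 : (ATset G A T).ncard ≤
          (ATset G A T ∩ NbrSet G U).ncard + (ATset G A (T \ U)).ncard :=
        le_trans (Set.ncard_le_ncard hcover) (Set.ncard_union_le _ _)
      have h4 : (T \ U).ncard + U.ncard = T.ncard :=
        Set.ncard_diff_add_ncard_of_subset hUT
      omega

/-- Key bound: a maximal independent set of an unmixed graph without isolated vertices
has at most half the vertices. -/
lemma maxIndep_half (hG : Unmixed G) (hiso : HasNoIsolatedVertex G)
    (hA : IsMaxIndepSet G A) : 2 * A.ncard ≤ Fintype.card V := by
  have hAeq : ATset G A Aᶜ = A := by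
    ext a
    simp only [ATset, Set.mem_setOf_eq]
    refine ⟨fun h => h.1, fun ha => ⟨ha, fun x hx hxA => hA.1 ha hxA hx⟩⟩
  have h1 : A.ncard ≤ (Aᶜ).ncard := by
    have := card_ATset_le hG hiso hA (Aᶜ).ncard Aᶜ subset_rfl le_rfl
    rwa [hAeq] at this
  have h2 : A.ncard + (Aᶜ).ncard = Fintype.card V := by
    rw [Set.ncard_add_ncard_compl, Nat.card_eq_fintype_card]
  omega

/-- The complement of a minimal vertex cover is a maximal independent set. -/
lemma compl_minVertexCover {C : Set V} (hC : IsMinVertexCover G C) : IsMaxIndepSet G Cᶜ := by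
  constructor
  · intro a ha b hb hab
    rcases hC.1 hab with h | h
    · exact ha h
    · exact hb h
  · intro B hBi hCB
    refine Set.Subset.antisymm hCB fun v hv => ?_
    by_contra hvC
    rw [Set.notMem_compl_iff] at hvC
    have hss : C \ {v} ⊂ C := ⟨Set.diff_subset, fun h => (h hvC).2 rfl⟩
    have hnc := hC.2 (C \ {v}) hss
    rw [IsVertexCover] at hnc
    push_neg at hnc
    obtain ⟨a, b, hab, haD, hbD⟩ := hnc
    have hmem : ∀ x, x ∉ C \ {v} → x ∈ B := by
      intro x hx
      by_cases hxC : x ∈ C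
      · have : x = v := by
          by_contra hne
          exact hx ⟨hxC, hne⟩
        exact this ▸ hv
      · exact hCB hxC
    exact hBi (hmem a haD) (hmem b hbD) hab

end StatementEightAux

/-- in an unmixed finite simple graph without isolated vertices, every
minimal vertex cover has cardinality at least `n/2`; equivalently, every maximal independent
set has cardinality at most `n/2`. -/

theorem statement8 {V : Type*} [Fintype V] (G : SimpleGraph V) (hG : Unmixed G)
    (hiso : HasNoIsolatedVertex G) :
    (∀ C : Set V, IsMinVertexCover G C → Fintype.card V ≤ 2 * C.ncard) ∧
    (∀ A : Set V, IsMaxIndepSet G A → 2 * A.ncard ≤ Fintype.card V) := by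
  constructor
  · intro C hC
    have hA := compl_minVertexCover (G := G) hC
    have h1 := maxIndep_half hG hiso hA
    have h2 : (Cᶜ).ncard + (Cᶜᶜ).ncard = Fintype.card V := by
      rw [Set.ncard_add_ncard_compl, Nat.card_eq_fintype_card]
    rw [compl_compl] at h2
    omega
  · intro A hA
    exact maxIndep_half hG hiso hA
end

section
/- Let G be a claw-free finite simple graph with n vertices and no isolated vertices. Then G admits a minimal vertex cover of cardinality at least n/2; equivalently, G has a maximal independent set of cardinality at most n/2. -/
open MvPolynomial

section Statement9Aux

variable {V : Type*} [DecidableEq V] (G : SimpleGraph V) [DecidableRel G.Adj]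

/-- The neighbors of `v` inside `s`. -/
private def Nbr (s : Finset V) (v : V) : Finset V := s.filter (fun y => G.Adj v y)

/-- Vertices of `s` outside the closed neighborhood of `v` whose neighbors in `s`
all lie in `N(v)` (these become isolated after deleting `N[v]`). -/
private def Iso (s : Finset V) (v : V) : Finset V :=
  s.filter (fun x => ¬ G.Adj v x ∧ x ≠ v ∧ ∀ y ∈ s, G.Adj x y → G.Adj v y)

variable {G}

private lemma mem_Nbr {s : Finset V} {v x : V} :
    x ∈ Nbr G s v ↔ x ∈ s ∧ G.Adj v x := Finset.mem_filter

private lemma mem_Iso {s : Finset V} {v x : V} :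
    x ∈ Iso G s v ↔ x ∈ s ∧ ¬ G.Adj v x ∧ x ≠ v ∧ ∀ y ∈ s, G.Adj x y → G.Adj v y :=
  Finset.mem_filter

/-- Claw-freeness: two distinct non-neighbors of `v` adjacent to a common
neighbor `z` of `v` must coincide (otherwise `z` is the center of a claw). -/
private lemma claw_eq (hG : ClawFree G) {v z x1 x2 : V}
    (hvz : G.Adj v z) (h1 : G.Adj x1 z) (h2 : G.Adj x2 z)
    (hv1 : ¬ G.Adj v x1) (hv2 : ¬ G.Adj v x2) (h12 : ¬ G.Adj x1 x2)
    (hx1v : x1 ≠ v) (hx2v : x2 ≠ v) : x1 = x2 := by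
  by_contra hne
  exact hG ⟨z, v, x1, x2, hvz.symm, h1.symm, h2.symm, hv1, hv2, h12,
    Ne.symm hx1v, Ne.symm hx2v, hne⟩

/-- Key lemma: in a claw-free graph, if every vertex of `s` has a neighbor in `s`,
then some `v ∈ s` satisfies `|Iso v| < |Nbr v|`. -/
private lemma exists_good_vertex (hG : ClawFree G) (s : Finset V) (hne : s.Nonempty)
    (hs : ∀ v ∈ s, ∃ w ∈ s, G.Adj v w) :
    ∃ v ∈ s, (Iso G s v).card < (Nbr G s v).card := by
  obtain ⟨v, hv, hmax⟩ := s.exists_max_image (fun v => (Nbr G s v).card) hne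
  by_cases hlt : (Iso G s v).card < (Nbr G s v).card
  · exact ⟨v, hv, hlt⟩
  -- build an injection from `Iso v` to `Nbr v`
  have hf : ∀ x : V, ∃ y : V, x ∈ Iso G s v → y ∈ Nbr G s v ∧ G.Adj x y := by
    intro x
    by_cases hx : x ∈ Iso G s v
    · obtain ⟨hxs, _, _, hall⟩ := mem_Iso.1 hx
      obtain ⟨y, hy, hadj⟩ := hs x hxs
      exact ⟨y, fun _ => ⟨mem_Nbr.2 ⟨hy, hall y hy hadj⟩, hadj⟩⟩
    · exact ⟨v, fun h => absurd h hx⟩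
  choose f hfmem using hf
  have hinj : Set.InjOn f (Iso G s v) := by
    intro x1 h1 x2 h2 heq
    obtain ⟨hx1s, hnv1, hx1v, hall1⟩ := mem_Iso.1 h1
    obtain ⟨hx2s, hnv2, hx2v, hall2⟩ := mem_Iso.1 h2
    have hm1 := hfmem x1 h1
    have hm2 := hfmem x2 h2
    have hvz : G.Adj v (f x1) := (mem_Nbr.1 hm1.1).2
    have hadj2 : G.Adj x2 (f x1) := heq ▸ hm2.2
    have h12 : ¬ G.Adj x1 x2 := fun h => hnv2 (hall1 x2 hx2s h)
    exact claw_eq hG hvz hm1.2 hadj2 hnv1 hnv2 h12 hx1v hx2v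
  have hle : (Iso G s v).card ≤ (Nbr G s v).card :=
    Finset.card_le_card_of_injOn f (fun x hx => (hfmem x hx).1) hinj
  have heqc : (Iso G s v).card = (Nbr G s v).card := le_antisymm hle (not_lt.1 hlt)
  have himg : (Iso G s v).image f = Nbr G s v := by
    apply Finset.eq_of_subset_of_card_le
    · intro y hy
      obtain ⟨x, hx, rfl⟩ := Finset.mem_image.1 hy
      exact (hfmem x hx).1
    · rw [Finset.card_image_of_injOn hinj, heqc]
  -- pick a neighbor `z` of `v` and its preimage `x`
  obtain ⟨z0, hz0s, hz0adj⟩ := hs v hv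
  have hz : z0 ∈ Nbr G s v := mem_Nbr.2 ⟨hz0s, hz0adj⟩
  obtain ⟨x, hxI, hfx⟩ := Finset.mem_image.1 (himg ▸ hz)
  obtain ⟨hxs, hnvx, hxvne, hallx⟩ := mem_Iso.1 hxI
  have hxz : G.Adj x z0 := by rw [← hfx]; exact (hfmem x hxI).2
  -- `z0` is the unique neighbor of `x` in `s`
  have huniq : ∀ y ∈ s, G.Adj x y → y = z0 := by
    intro y hy hxy
    have hvy : G.Adj v y := hallx y hy hxy
    have hyN : y ∈ Nbr G s v := mem_Nbr.2 ⟨hy, hvy⟩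
    obtain ⟨x', hx'I, hfx'⟩ := Finset.mem_image.1 (himg ▸ hyN)
    obtain ⟨hx's, hnvx', hx'vne, hallx'⟩ := mem_Iso.1 hx'I
    have hx'adj : G.Adj x' y := by rw [← hfx']; exact (hfmem x' hx'I).2
    have h12 : ¬ G.Adj x x' := fun h => hnvx' (hallx x' hx's h)
    have hxx' : x = x' := claw_eq hG hvy hxy hx'adj hnvx hnvx' h12 hxvne hx'vne
    rw [← hfx', ← hxx', hfx]
  refine ⟨x, hxs, ?_⟩
  have hNx : Nbr G s x = {z0} := by
    apply Finset.eq_singleton_iff_unique_mem.2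
    exact ⟨mem_Nbr.2 ⟨hz0s, hxz⟩, fun y hy => huniq y (mem_Nbr.1 hy).1 (mem_Nbr.1 hy).2⟩
  have hIx : Iso G s x = ∅ := by
    rw [Finset.eq_empty_iff_forall_notMem]
    intro y hy
    obtain ⟨hys, hnxy, hyx, hally⟩ := mem_Iso.1 hy
    obtain ⟨w, hws, hyw⟩ := hs y hys
    have hxw : G.Adj x w := hally w hws hyw
    have hwz : w = z0 := huniq w hws hxw
    have hyz : G.Adj y z0 := hwz ▸ hyw
    have hvy : v ≠ y := by
      rintro rfl
      have h1 : Nbr G s v ⊆ {z0} := by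
        intro w' hw'
        obtain ⟨hw's, hadjw'⟩ := mem_Nbr.1 hw'
        exact Finset.mem_singleton.2 (huniq w' hw's (hally w' hw's hadjw'))
      have h2 : ({v, x} : Finset V) ⊆ Nbr G s z0 := by
        intro w' hw'
        rcases Finset.mem_insert.1 hw' with rfl | hw'
        · exact mem_Nbr.2 ⟨hv, hz0adj.symm⟩
        · rw [Finset.mem_singleton.1 hw']
          exact mem_Nbr.2 ⟨hxs, hxz.symm⟩
      have h3 : 2 ≤ (Nbr G s z0).card := by
        calc 2 = ({v, x} : Finset V).card := (Finset.card_pair (Ne.symm hxvne)).symm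
        _ ≤ (Nbr G s z0).card := Finset.card_le_card h2
      have h4 := hmax z0 hz0s
      have h5 := Finset.card_le_card h1
      simp only [Finset.card_singleton] at h5
      omega
    have hnvy : ¬ G.Adj v y := fun h => hnvx (hally v hv h.symm).symm
    exact hG ⟨z0, v, x, y, hz0adj.symm, hxz.symm, hyz.symm, hnvx, hnvy,
      hnxy, Ne.symm hxvne, hvy, Ne.symm hyx⟩
  rw [hNx, hIx]
  simp

/-- Main induction: a claw-free graph in which every vertex of `s` has a neighbor
in `s` has an independent set `A ⊆ s` dominating `s` with `2|A| ≤ |s|`. -/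
private lemma claw_main (hG : ClawFree G) :
    ∀ s : Finset V, (∀ v ∈ s, ∃ w ∈ s, G.Adj v w) →
      ∃ A : Finset V, A ⊆ s ∧ (∀ a ∈ A, ∀ b ∈ A, ¬ G.Adj a b) ∧
        (∀ b ∈ s, b ∉ A → ∃ a ∈ A, G.Adj a b) ∧ 2 * A.card ≤ s.card := by
  intro s
  induction s using Finset.strongInduction with
  | _ s ih =>
    intro hs
    rcases s.eq_empty_or_nonempty with rfl | hne
    · exact ⟨∅, Finset.Subset.refl _, by simp, by simp, by simp⟩
    obtain ⟨v, hv, hlt⟩ := exists_good_vertex hG s hne hs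
    set T : Finset V := insert v (Nbr G s v ∪ Iso G s v) with hT
    have hTs : T ⊆ s := by
      rw [hT]
      exact Finset.insert_subset hv
        (Finset.union_subset (Finset.filter_subset _ _) (Finset.filter_subset _ _))
    set s' : Finset V := s \ T with hs'def
    have hss' : s' ⊆ s := Finset.sdiff_subset
    have hvT : v ∈ T := by rw [hT]; exact Finset.mem_insert_self _ _
    have hvs' : v ∉ s' := fun h => (Finset.mem_sdiff.1 h).2 hvT
    have hsub : s' ⊂ s := Finset.ssubset_iff_of_subset hss' |>.2 ⟨v, hv, hvs'⟩
    have hs's : ∀ x ∈ s', ∃ w ∈ s', G.Adj x w := by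
      intro x hx
      obtain ⟨hxs, hxT⟩ := Finset.mem_sdiff.1 hx
      rw [hT] at hxT
      simp only [Finset.mem_insert, Finset.mem_union, not_or] at hxT
      obtain ⟨hxv, hxN, hxI⟩ := hxT
      have hnadj : ¬ G.Adj v x := fun h => hxN (mem_Nbr.2 ⟨hxs, h⟩)
      have hnex : ¬ (∀ y ∈ s, G.Adj x y → G.Adj v y) :=
        fun hall => hxI (mem_Iso.2 ⟨hxs, hnadj, hxv, hall⟩)
      push_neg at hnex
      obtain ⟨y, hys, hxy, hnvy⟩ := hnex
      refine ⟨y, Finset.mem_sdiff.2 ⟨hys, ?_⟩, hxy⟩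
      rw [hT]
      simp only [Finset.mem_insert, Finset.mem_union, not_or]
      refine ⟨?_, fun h => hnvy (mem_Nbr.1 h).2, fun h => ?_⟩
      · rintro rfl; exact hnadj hxy.symm
      · exact hnadj ((mem_Iso.1 h).2.2.2 x hxs hxy.symm)
    obtain ⟨A', hA's, hA'ind, hA'dom, hA'card⟩ := ih s' hsub hs's
    have hA'facts : ∀ a ∈ A', a ∈ s ∧ a ≠ v ∧ ¬ G.Adj v a ∧ a ∉ Iso G s v := by
      intro a ha
      obtain ⟨has, haT⟩ := Finset.mem_sdiff.1 (hA's ha)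
      rw [hT] at haT
      simp only [Finset.mem_insert, Finset.mem_union, not_or] at haT
      exact ⟨has, haT.1, fun h => haT.2.1 (mem_Nbr.2 ⟨has, h⟩), haT.2.2⟩
    refine ⟨insert v (Iso G s v ∪ A'), ?_, ?_, ?_, ?_⟩
    · exact Finset.insert_subset hv
        (Finset.union_subset (Finset.filter_subset _ _) (fun a ha => hss' (hA's ha)))
    · -- independence
      intro a ha b hb
      simp only [Finset.mem_insert, Finset.mem_union] at ha hb
      rcases ha with rfl | haI | haA <;> rcases hb with rfl | hbI | hbA
      · exact G.loopless.irrefl _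
      · exact (mem_Iso.1 hbI).2.1
      · exact (hA'facts b hbA).2.2.1
      · exact fun h => (mem_Iso.1 haI).2.1 h.symm
      · exact fun h => (mem_Iso.1 hbI).2.1
          ((mem_Iso.1 haI).2.2.2 b (mem_Iso.1 hbI).1 h)
      · exact fun h => (hA'facts b hbA).2.2.1
          ((mem_Iso.1 haI).2.2.2 b (hA'facts b hbA).1 h)
      · exact fun h => (hA'facts a haA).2.2.1 h.symm
      · exact fun h => (hA'facts a haA).2.2.1
          ((mem_Iso.1 hbI).2.2.2 a (hA'facts a haA).1 h.symm)
      · exact hA'ind a haA b hbA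
    · -- domination
      intro b hb hbA
      simp only [Finset.mem_insert, Finset.mem_union, not_or] at hbA
      obtain ⟨hbv, hbI, hbA'⟩ := hbA
      by_cases hbN : b ∈ Nbr G s v
      · exact ⟨v, Finset.mem_insert_self _ _, (mem_Nbr.1 hbN).2⟩
      · have hbs' : b ∈ s' := by
          refine Finset.mem_sdiff.2 ⟨hb, ?_⟩
          rw [hT]
          simp only [Finset.mem_insert, Finset.mem_union, not_or]
          exact ⟨hbv, hbN, hbI⟩
        obtain ⟨a, haA', hadj⟩ := hA'dom b hbs' hbA'
        exact ⟨a, by simp only [Finset.mem_insert, Finset.mem_union]; exact Or.inr (Or.inr haA'),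
          hadj⟩
    · -- cardinality
      have hvN : v ∉ Nbr G s v := fun h => G.loopless.irrefl v (mem_Nbr.1 h).2
      have hvI : v ∉ Iso G s v := fun h => (mem_Iso.1 h).2.2.1 rfl
      have hNI : Disjoint (Nbr G s v) (Iso G s v) := by
        rw [Finset.disjoint_left]
        exact fun x hxN hxI => (mem_Iso.1 hxI).2.1 (mem_Nbr.1 hxN).2
      have hTcard : T.card = (Nbr G s v).card + (Iso G s v).card + 1 := by
        rw [hT, Finset.card_insert_of_notMem (by simp [hvN, hvI]),
          Finset.card_union_of_disjoint hNI]
      have hscard : s'.card = s.card - T.card := by rw [hs'def, Finset.card_sdiff_of_subset hTs]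
      have hTles : T.card ≤ s.card := Finset.card_le_card hTs
      have hvA' : v ∉ A' := fun h => hvs' (hA's h)
      have hdisj2 : Disjoint (Iso G s v) A' := by
        rw [Finset.disjoint_left]
        intro x hxI hxA'
        exact (hA'facts x hxA').2.2.2 hxI
      have hAcard : (insert v (Iso G s v ∪ A')).card = (Iso G s v).card + A'.card + 1 := by
        rw [Finset.card_insert_of_notMem (by simp [hvI, hvA']),
          Finset.card_union_of_disjoint hdisj2]
      omega

end Statement9Aux

/-- a claw-free finite simple graph without isolated vertices admits a
minimal vertex cover of cardinality at least `n/2`; equivalently, it has a maximal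
independent set of cardinality at most `n/2`. -/
theorem statement9 {V : Type*} [Fintype V] (G : SimpleGraph V) (hG : ClawFree G)
    (hiso : HasNoIsolatedVertex G) :
    (∃ C : Set V, IsMinVertexCover G C ∧ Fintype.card V ≤ 2 * C.ncard) ∧
    (∃ A : Set V, IsMaxIndepSet G A ∧ 2 * A.ncard ≤ Fintype.card V) := by
  classical
  obtain ⟨A, hAs, hind, hdom, hcard⟩ := claw_main (G := G) hG Finset.univ
    (fun v _ => by obtain ⟨w, hw⟩ := hiso v; exact ⟨w, Finset.mem_univ w, hw⟩)
  have hAn : (↑A : Set V).ncard = A.card := Set.ncard_coe_finset A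
  have huniv : Finset.univ.card = Fintype.card V := Finset.card_univ
  have hdom' : ∀ b : V, b ∉ A → ∃ a ∈ A, G.Adj a b :=
    fun b hb => hdom b (Finset.mem_univ b) hb
  have hmax : IsMaxIndepSet G ↑A := by
    constructor
    · intro a ha b hb hadj
      exact hind a (Finset.mem_coe.1 ha) b (Finset.mem_coe.1 hb) hadj
    · intro B hB hAB
      apply Set.Subset.antisymm hAB
      intro b hbB
      by_contra hbA
      obtain ⟨a, haA, hadj⟩ := hdom' b (fun h => hbA (Finset.mem_coe.2 h))
      exact hB (hAB (Finset.mem_coe.2 haA)) hbB hadj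
  constructor
  · refine ⟨(↑A : Set V)ᶜ, ⟨?_, ?_⟩, ?_⟩
    · intro a b hadj
      by_contra h
      push_neg at h
      obtain ⟨ha, hb⟩ := h
      exact hind a (by simpa using ha) b (by simpa using hb) hadj
    · intro D hD hDcov
      obtain ⟨c, hcC, hcD⟩ := Set.exists_of_ssubset hD
      have hcA : c ∉ A := by simpa using hcC
      obtain ⟨a, haA, hadj⟩ := hdom' c hcA
      have haD : a ∉ D := fun h => (hD.1 h : a ∈ (↑A : Set V)ᶜ) (Finset.mem_coe.2 haA)
      rcases hDcov hadj with h | h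
      · exact haD h
      · exact hcD h
    · have h1 : (↑A : Set V).ncard + ((↑A : Set V)ᶜ).ncard = Fintype.card V := by
        rw [Set.ncard_add_ncard_compl, Nat.card_eq_fintype_card]
      omega
  · exact ⟨↑A, hmax, by omega⟩
end

section
/- Let G be a finite simple graph with vertex set V(G) = {x_1, …, x_n} and let v = x_1 x_2 ⋯ x_n ∈ S. Then for every integer k ≥ 2, the colon ideal (J(G)^{(k)} : v) equals J(G)^{(k-2)}, where J(G)^{(0)} is the unit ideal S. -/
open MvPolynomial

section Aux

variable {V K : Type*} [Field K]

private lemma support_bound_of_mem_span {a b : V} {h : MvPolynomial V K}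
    (hh : h ∈ Ideal.span {X a, X b}) :
    ∀ m ∈ h.support, 1 ≤ m a + m b := by
  classical
  induction hh using Submodule.span_induction with
  | mem x hx =>
    intro m hm
    rcases hx with rfl | rfl <;>
    · rw [MvPolynomial.support_X] at hm
      simp only [Finset.mem_singleton] at hm
      subst hm
      simp only [Finsupp.single_eq_same]
      omega
  | zero => simp
  | add x y hx hy ihx ihy =>
    intro m hm
    rcases Finset.mem_union.mp (MvPolynomial.support_add hm) with h | h
    · exact ihx m h
    · exact ihy m h
  | smul c x hx ih =>
    intro m hm
    rw [smul_eq_mul] at hm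
    obtain ⟨y, hy, z, hz, rfl⟩ := Finset.mem_add.mp (MvPolynomial.support_mul c x hm)
    have := ih z hz
    simp only [Finsupp.add_apply]
    omega

private lemma support_bound_of_mem_pow {a b : V} {k : ℕ} {f : MvPolynomial V K}
    (hf : f ∈ Ideal.span {X a, X b} ^ k) :
    ∀ m ∈ f.support, k ≤ m a + m b := by
  classical
  induction k generalizing f with
  | zero => intro m _; omega
  | succ k ih =>
    rw [pow_succ] at hf
    refine Submodule.mul_induction_on hf ?_ ?_
    · intro g hg h hh m hm
      obtain ⟨y, hy, z, hz, rfl⟩ := Finset.mem_add.mp (MvPolynomial.support_mul g h hm)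
      have h1 := ih hg y hy
      have h2 := support_bound_of_mem_span hh z hz
      simp only [Finsupp.add_apply]
      omega
    · intro x y ihx ihy m hm
      rcases Finset.mem_union.mp (MvPolynomial.support_add hm) with h | h
      · exact ihx m h
      · exact ihy m h

private lemma mem_pow_of_support_bound {a b : V} (hab : a ≠ b) {k : ℕ} {f : MvPolynomial V K}
    (hf : ∀ m ∈ f.support, k ≤ m a + m b) :
    f ∈ Ideal.span {X a, X b} ^ k := by
  classical
  rw [← MvPolynomial.support_sum_monomial_coeff f]
  refine Ideal.sum_mem _ ?_
  intro m hm
  have hmk : k ≤ m a + m b := hf m hm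
  have hXa : (X a : MvPolynomial V K) ∈ Ideal.span {X a, X b} :=
    Ideal.subset_span (by simp)
  have hXb : (X b : MvPolynomial V K) ∈ Ideal.span {X a, X b} :=
    Ideal.subset_span (by simp)
  have hprod : (X a : MvPolynomial V K) ^ (m a) * X b ^ (m b) ∈
      Ideal.span {X a, X b} ^ k := by
    have h1 : (X a : MvPolynomial V K) ^ (m a) * X b ^ (m b) ∈
        Ideal.span {X a, X b} ^ (m a) * Ideal.span {X a, X b} ^ (m b) :=
      Ideal.mul_mem_mul (Ideal.pow_mem_pow hXa _) (Ideal.pow_mem_pow hXb _)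
    rw [← pow_add] at h1
    exact Ideal.pow_le_pow_right hmk h1
  have hind : m - Finsupp.single a (m a) - Finsupp.single b (m b) +
      (Finsupp.single a (m a) + Finsupp.single b (m b)) = m := by
    ext i
    rcases eq_or_ne a i with rfl | hia
    · rcases eq_or_ne b a with hb | hb
      · exact absurd hb.symm hab
      · simp [Finsupp.add_apply, Finsupp.tsub_apply, Finsupp.single_eq_same,
          Finsupp.single_eq_of_ne' hb]
    · rcases eq_or_ne b i with rfl | hib
      · simp [Finsupp.add_apply, Finsupp.tsub_apply, Finsupp.single_eq_same,
          Finsupp.single_eq_of_ne' hia]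
      · simp [Finsupp.add_apply, Finsupp.tsub_apply, Finsupp.single_eq_of_ne' hia,
          Finsupp.single_eq_of_ne' hib]
  have key : (monomial m (MvPolynomial.coeff m f) : MvPolynomial V K) =
      monomial (m - Finsupp.single a (m a) - Finsupp.single b (m b))
        (MvPolynomial.coeff m f) * (X a ^ (m a) * X b ^ (m b)) := by
    rw [MvPolynomial.X_pow_eq_monomial, MvPolynomial.X_pow_eq_monomial,
      MvPolynomial.monomial_mul, MvPolynomial.monomial_mul, mul_one, mul_one, hind]
  rw [key]
  exact Ideal.mul_mem_left _ _ hprod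

end Aux

/-- Lemma 3.4 of [s6]: with `v = x_1 ⋯ x_n` the product of all the
variables, `(J(G)^{(k)} : v) = J(G)^{(k-2)}` for every `k ≥ 2` (with `J(G)^{(0)} = S`). -/
theorem statement10 {V : Type*} [Fintype V] (K : Type*) [Field K] (G : SimpleGraph V)
    (k : ℕ) (hk : 2 ≤ k) :
    Submodule.colon (symbPow K G k) (Ideal.span {(∏ i : V, X i : MvPolynomial V K)}) =
      symbPow K G (k - 2) := by
  classical
  ext f
  rw [← Ideal.submodule_span_eq, Submodule.mem_colon_span_singleton, smul_eq_mul]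
  simp only [symbPow, Ideal.mem_iInf]
  refine forall_congr' fun p => forall_congr' fun hp => ?_
  set a := p.1
  set b := p.2
  have hab : a ≠ b := hp.ne
  -- the exponent vector of the product of all variables
  set u : V →₀ ℕ := ∑ i : V, Finsupp.single i 1 with hu
  have hua : ∀ i : V, u i = 1 := by
    intro i
    rw [hu]
    rw [Finset.sum_apply']
    simp [Finsupp.single_apply]
  have hv : (∏ i : V, X i : MvPolynomial V K) = monomial u 1 := by
    rw [hu, MvPolynomial.monomial_sum_one]
    exact Finset.prod_congr rfl fun i _ => rfl
  constructor
  · intro hmem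
    refine mem_pow_of_support_bound hab ?_
    intro m hm
    have hcoeff : MvPolynomial.coeff (m + u) (f * (∏ i : V, X i : MvPolynomial V K)) =
        MvPolynomial.coeff m f := by
      rw [hv, MvPolynomial.coeff_mul_monomial, mul_one]
    have hsupp : m + u ∈ (f * (∏ i : V, X i : MvPolynomial V K)).support := by
      rw [MvPolynomial.mem_support_iff, hcoeff]
      exact MvPolynomial.mem_support_iff.mp hm
    have := support_bound_of_mem_pow hmem _ hsupp
    simp only [Finsupp.add_apply, hua] at this
    omega
  · intro hmem
    have hb : b ∈ Finset.univ.erase a := Finset.mem_erase.mpr ⟨hab.symm, Finset.mem_univ b⟩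
    have hsplit : (∏ i : V, X i : MvPolynomial V K) =
        X a * (X b * ∏ i ∈ (Finset.univ.erase a).erase b, X i) := by
      rw [Finset.mul_prod_erase _ _ hb, Finset.mul_prod_erase _ _ (Finset.mem_univ a)]
    rw [hsplit]
    have hXa : (X a : MvPolynomial V K) ∈ Ideal.span {X a, X b} :=
      Ideal.subset_span (by simp)
    have hXb : (X b : MvPolynomial V K) ∈ Ideal.span {X a, X b} :=
      Ideal.subset_span (by simp)
    have h2 : (X a : MvPolynomial V K) * X b ∈ Ideal.span {X a, X b} ^ 2 := by
      rw [sq]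
      exact Ideal.mul_mem_mul hXa hXb
    have hrest : (∏ i ∈ (Finset.univ.erase a).erase b, X i : MvPolynomial V K) * f ∈
        Ideal.span {X a, X b} ^ (k - 2) := Ideal.mul_mem_left _ _ hmem
    have : (X a : MvPolynomial V K) * X b *
        ((∏ i ∈ (Finset.univ.erase a).erase b, X i) * f) ∈
        Ideal.span {X a, X b} ^ 2 * Ideal.span {X a, X b} ^ (k - 2) :=
      Ideal.mul_mem_mul h2 hrest
    rw [← pow_add, (by omega : 2 + (k - 2) = k)] at this
    convert this using 1
    ring
end

section
/- Let G be a finite simple graph with vertex set {x_1, …, x_n} and, for an integer r ≥ 1, let G_r be the graph with vertex set {x_{i,p} : 1 ≤ i ≤ n, 1 ≤ p ≤ r} and edge set {{x_{i,p}, x_{j,q}} : {x_i, x_j} ∈ E(G) and p + q ≤ r + 1}. Fix an integer k ≥ 1 and set W = {x_{i, ⌊(k+1)/2⌋ + 1} : 1 ≤ i ≤ n} ⊆ V(G_{k+1}). Then the map φ sending x_{i,j} to x_{i,j} if 1 ≤ j ≤ ⌊(k+1)/2⌋ and to x_{i,j+1} if j ≥ ⌊(k+1)/2⌋ + 1 is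 a graph isomorphism from G_k onto the induced subgraph G_{k+1} \ W; in particular, G_k is isomorphic to an induced subgraph of G_{k+1}. -/
open MvPolynomial

/-- The graph `G_r` associated to a graph `G` and an integer `r ≥ 1`: its vertices are the
pairs `x_{i,p}` with `x_i ∈ V(G)` and `1 ≤ p ≤ r` (here `p ∈ Fin r` is 0-indexed), and
`{x_{i,p}, x_{j,q}}` is an edge exactly when `{x_i, x_j} ∈ E(G)` and `p + q ≤ r + 1`
(0-indexed: `p + q + 1 ≤ r - 1 + 1`, i.e. `(p+1) + (q+1) ≤ r + 1`). -/
def layeredGraph {V : Type*} (G : SimpleGraph V) (r : ℕ) : SimpleGraph (V × Fin r) where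
  Adj a b := G.Adj a.1 b.1 ∧ (a.2.val + 1) + (b.2.val + 1) ≤ r + 1
  symm := ⟨fun a b h => ⟨h.1.symm, by omega⟩⟩
  loopless := ⟨fun a h => G.loopless.irrefl a.1 h.1⟩

lemma layeredGraph_adj {V : Type*} (G : SimpleGraph V) (r : ℕ) (a b : V × Fin r) :
    (layeredGraph G r).Adj a b ↔ G.Adj a.1 b.1 ∧ (a.2.val + 1) + (b.2.val + 1) ≤ r + 1 :=
  Iff.rfl

/-- from the proof of Theorem `main2`: for `k ≥ 1`, the map `φ` sending
`x_{i,j}` to `x_{i,j}` for `1 ≤ j ≤ ⌊(k+1)/2⌋` and to `x_{i,j+1}` for `j ≥ ⌊(k+1)/2⌋ + 1`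
is a graph isomorphism from `G_k` onto the induced subgraph of `G_{k+1}` obtained by deleting
`W = {x_{i,⌊(k+1)/2⌋+1} : 1 ≤ i ≤ n}`; in particular, `G_k` is isomorphic to an induced
subgraph of `G_{k+1}`.  (In the 0-indexed formulation, `W` consists of the vertices whose
second coordinate equals `⌊(k+1)/2⌋`, and `φ (i, j) = (i, j)` for `j < ⌊(k+1)/2⌋` while
`φ (i, j) = (i, j+1)` otherwise.) -/
theorem statement12 {V : Type*} [Fintype V] (G : SimpleGraph V) (k : ℕ) (hk : 1 ≤ k) :
    ∃ e : layeredGraph G k ≃g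
        (layeredGraph G (k + 1)).induce ({a : V × Fin (k + 1) | a.2.val = (k + 1) / 2}ᶜ),
      ∀ a : V × Fin k, (e a : V × Fin (k + 1)) =
        (a.1, if a.2.val < (k + 1) / 2 then a.2.castSucc else a.2.succ) := by
  have h2m : k ≤ 2 * ((k + 1) / 2) ∧ 2 * ((k + 1) / 2) ≤ k + 1 := by omega
  refine ⟨RelIso.mk (Equiv.mk
      (fun a => ⟨(a.1, ⟨if a.2.val < (k + 1) / 2 then a.2.val else a.2.val + 1, ?_⟩), ?_⟩)
      (fun b => ((b : V × Fin (k + 1)).1,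
        ⟨if (b : V × Fin (k + 1)).2.val < (k + 1) / 2
          then (b : V × Fin (k + 1)).2.val
          else (b : V × Fin (k + 1)).2.val - 1, ?_⟩)) ?_ ?_) ?_, ?_⟩
  case refine_1 =>
    have ha := a.2.isLt
    split_ifs <;> omega
  case refine_2 =>
    have ha := a.2.isLt
    simp only [Set.mem_compl_iff, Set.mem_setOf_eq, Fin.val_mk]
    split_ifs <;> omega
  case refine_3 =>
    have hb : (b : V × Fin (k + 1)).2.val ≠ (k + 1) / 2 := b.2
    have hlt := (b : V × Fin (k + 1)).2.isLt
    split_ifs <;> omega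
  case refine_4 =>
    intro a
    have ha := a.2.isLt
    refine Prod.ext rfl (Fin.ext ?_)
    show (if (if a.2.val < (k + 1) / 2 then a.2.val else a.2.val + 1) < (k + 1) / 2
        then (if a.2.val < (k + 1) / 2 then a.2.val else a.2.val + 1)
        else (if a.2.val < (k + 1) / 2 then a.2.val else a.2.val + 1) - 1) = a.2.val
    split_ifs <;> omega
  case refine_5 =>
    intro b
    have hb : (b : V × Fin (k + 1)).2.val ≠ (k + 1) / 2 := b.2
    have hlt := (b : V × Fin (k + 1)).2.isLt
    refine Subtype.ext (Prod.ext rfl (Fin.ext ?_))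
    show (if (if (b : V × Fin (k + 1)).2.val < (k + 1) / 2
            then (b : V × Fin (k + 1)).2.val else (b : V × Fin (k + 1)).2.val - 1)
              < (k + 1) / 2
        then (if (b : V × Fin (k + 1)).2.val < (k + 1) / 2
            then (b : V × Fin (k + 1)).2.val else (b : V × Fin (k + 1)).2.val - 1)
        else (if (b : V × Fin (k + 1)).2.val < (k + 1) / 2
            then (b : V × Fin (k + 1)).2.val else (b : V × Fin (k + 1)).2.val - 1) + 1)
      = (b : V × Fin (k + 1)).2.val
    split_ifs <;> omega
  case refine_6 =>
    intro a b
    have ha := a.2.isLt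
    have hb := b.2.isLt
    constructor
    · rintro ⟨hG, hle⟩
      refine ⟨hG, ?_⟩
      have hle' : (if a.2.val < (k + 1) / 2 then a.2.val else a.2.val + 1) + 1 +
          ((if b.2.val < (k + 1) / 2 then b.2.val else b.2.val + 1) + 1) ≤ (k + 1) + 1 := hle
      split_ifs at hle' <;> omega
    · rintro ⟨hG, hle⟩
      refine ⟨hG, ?_⟩
      show (if a.2.val < (k + 1) / 2 then a.2.val else a.2.val + 1) + 1 +
          ((if b.2.val < (k + 1) / 2 then b.2.val else b.2.val + 1) + 1) ≤ (k + 1) + 1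
      split_ifs <;> omega
  case refine_7 =>
    intro a
    refine Prod.ext rfl (Fin.ext ?_)
    show (if a.2.val < (k + 1) / 2 then a.2.val else a.2.val + 1) =
      ((if a.2.val < (k + 1) / 2 then a.2.castSucc else a.2.succ : Fin (k + 1))).val
    split_ifs <;> rfl
end

section
/- Let G be a very well-covered graph with vertices labeled V(G) = {x_1, …, x_h, y_1, …, y_h} so that: {x_1, …, x_h} is a minimal vertex cover, {y_1, …, y_h} is a maximal independent set, and {x_i, y_i} ∈ E(G) for each i. Fix an integer k ≥ 2 and let G_k be the graph with vertex set {x_{i,p}, y_{i,p} : 1 ≤ i ≤ h, 1 ≤ p ≤ k} and edge set {{x_{i,p}, x_{j,q}} : {x_i,x_j} ∈ E(G), p + q ≤ k + 1} ∪ {{x_{i,p}, y_{j,q}} : {x_i,y_j} ∈ E(G), p + q ≤ k + 1}. Set F = {y_{i,j} : 1 ≤ i ≤ h, 2 ≤ j ≤ k}. Then: (a) F is an independent set of G_k; (b) N_{G_k}[F] = F ∪ {x_{i,j} : 1 ≤ i ≤ h, 1 ≤ j ≤ k-1}; (c) the induced subgraph G_k \ N_{G_k}[F] is isomorphic to the bipartite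 graph G' with vertex set V(G) and edge set {{x_i, y_j} : 1 ≤ i, j ≤ h, {x_i, y_j} ∈ E(G)}. -/
open MvPolynomial

/-- The graph `G_k` associated to a graph `G` on `{x_1,…,x_h, y_1,…,y_h}` (vertex type
`Fin h ⊕ Fin h`, with `x_i = Sum.inl i` and `y_i = Sum.inr i`): its vertices are the pairs
`x_{i,p}, y_{i,p}` with `1 ≤ i ≤ h`, `1 ≤ p ≤ k` (here `p ∈ Fin k` is 0-indexed), and its
edges are `{x_{i,p}, x_{j,q}}` for `{x_i,x_j} ∈ E(G)`, `p + q ≤ k + 1`, together with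
`{x_{i,p}, y_{j,q}}` for `{x_i,y_j} ∈ E(G)`, `p + q ≤ k + 1` (so at least one endpoint lies
in the `x`-part). -/
def wellCoveredLayered (h : ℕ) (G : SimpleGraph (Fin h ⊕ Fin h)) (k : ℕ) :
    SimpleGraph ((Fin h ⊕ Fin h) × Fin k) where
  Adj a b := G.Adj a.1 b.1 ∧ (a.2.val + 1) + (b.2.val + 1) ≤ k + 1 ∧
    (a.1.isLeft ∨ b.1.isLeft)
  symm := ⟨fun a b hab => ⟨hab.1.symm, by omega, hab.2.2.symm⟩⟩
  loopless := ⟨fun a hab => G.loopless.irrefl a.1 hab.1⟩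

/-- The bipartite graph `G'` obtained from `G` by deleting the edges with both endpoints in
the `x`-part: its vertex set is `V(G)` and its edges are the edges `{x_i, y_j}` of `G`. -/
def bipartitePart (h : ℕ) (G : SimpleGraph (Fin h ⊕ Fin h)) :
    SimpleGraph (Fin h ⊕ Fin h) where
  Adj a b := G.Adj a b ∧ ((a.isLeft ∧ b.isRight) ∨ (a.isRight ∧ b.isLeft))
  symm := ⟨fun a b hab => ⟨hab.1.symm, hab.2.symm.imp And.symm And.symm⟩⟩
  loopless := ⟨fun a hab => G.loopless.irrefl a hab.1⟩

/-- from the proof of Proposition `linwell`: let `G` be a very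
well-covered graph with vertices labeled `x_1,…,x_h, y_1,…,y_h` so that `{x_1,…,x_h}` is a
minimal vertex cover, `{y_1,…,y_h}` is a maximal independent set, and `{x_i,y_i} ∈ E(G)` for
all `i`.  For `k ≥ 2`, let `G_k` be as above and set `F = {y_{i,j} : 1 ≤ i ≤ h, 2 ≤ j ≤ k}`
(0-indexed: second coordinate `≥ 1`).  Then (a) `F` is independent in `G_k`;
(b) `N_{G_k}[F] = F ∪ {x_{i,j} : 1 ≤ i ≤ h, 1 ≤ j ≤ k-1}` (0-indexed: second coordinate
`≤ k - 2`); and (c) `G_k \ N_{G_k}[F]` is isomorphic to the bipartite graph `G'`. -/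
theorem statement13 (h : ℕ) (G : SimpleGraph (Fin h ⊕ Fin h)) (hvwc : VeryWellCovered G)
    (hcover : IsMinVertexCover G (Set.range Sum.inl))
    (hindep : IsMaxIndepSet G (Set.range Sum.inr))
    (hmatch : ∀ i : Fin h, G.Adj (Sum.inl i) (Sum.inr i))
    (k : ℕ) (hk : 2 ≤ k)
    (F : Set ((Fin h ⊕ Fin h) × Fin k))
    (hF : F = {a : (Fin h ⊕ Fin h) × Fin k | a.1.isRight ∧ 1 ≤ a.2.val}) :
    IsIndepSet (wellCoveredLayered h G k) F ∧
    closedNbhdSet (wellCoveredLayered h G k) F =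
      F ∪ {a : (Fin h ⊕ Fin h) × Fin k | a.1.isLeft ∧ a.2.val + 1 ≤ k - 1} ∧
    Nonempty
      ((wellCoveredLayered h G k).induce
          ((closedNbhdSet (wellCoveredLayered h G k) F)ᶜ) ≃g bipartitePart h G) := by
  subst hF
  have hk0 : 0 < k := by omega
  have hk1 : k - 1 < k := by omega
  have hindep' : IsIndepSet (wellCoveredLayered h G k)
      {a : (Fin h ⊕ Fin h) × Fin k | a.1.isRight ∧ 1 ≤ a.2.val} := by
    rintro a ⟨ha, -⟩ b ⟨hb, -⟩ ⟨-, -, hl | hl⟩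
    · rcases a with ⟨v, p⟩; cases v <;> simp_all
    · rcases b with ⟨v, p⟩; cases v <;> simp_all
  have hnbhd : closedNbhdSet (wellCoveredLayered h G k)
      {a : (Fin h ⊕ Fin h) × Fin k | a.1.isRight ∧ 1 ≤ a.2.val} =
      {a : (Fin h ⊕ Fin h) × Fin k | a.1.isRight ∧ 1 ≤ a.2.val} ∪
      {a : (Fin h ⊕ Fin h) × Fin k | a.1.isLeft ∧ a.2.val + 1 ≤ k - 1} := by
    ext b
    simp only [closedNbhdSet, Set.mem_iUnion, Set.mem_insert_iff,
      SimpleGraph.mem_neighborSet, Set.mem_setOf_eq, Set.mem_union]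
    constructor
    · rintro ⟨a, ⟨haR, ha1⟩, hb | hadj⟩
      · subst hb; exact Or.inl ⟨haR, ha1⟩
      · rcases hadj with ⟨hGadj, hsum, hl | hl⟩
        · rcases a with ⟨v, p⟩; cases v <;> simp_all
        · right
          refine ⟨hl, by omega⟩
    · rintro (hb | ⟨hbL, hble⟩)
      · exact ⟨b, hb, Or.inl rfl⟩
      · rcases b with ⟨v, p⟩
        rcases v with i | i
        · refine ⟨(Sum.inr i, ⟨1, by omega⟩), ⟨rfl, le_refl _⟩, Or.inr ?_⟩
          refine ⟨(hmatch i).symm, ?_, Or.inr rfl⟩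
          have hple : p.val + 1 ≤ k - 1 := hble
          show (1 + 1) + (p.val + 1) ≤ k + 1
          omega
        · simp at hbL
  refine ⟨hindep', hnbhd, ?_⟩
  rw [hnbhd]
  set S : Set ((Fin h ⊕ Fin h) × Fin k) :=
    ({a : (Fin h ⊕ Fin h) × Fin k | a.1.isRight ∧ 1 ≤ a.2.val} ∪
      {a : (Fin h ⊕ Fin h) × Fin k | a.1.isLeft ∧ a.2.val + 1 ≤ k - 1})ᶜ with hS
  have memS : ∀ a : (Fin h ⊕ Fin h) × Fin k, a ∈ S ↔
      (a.1.isLeft ∧ a.2.val = k - 1) ∨ (a.1.isRight ∧ a.2.val = 0) := by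
    rintro ⟨v, p⟩
    have hp := p.isLt
    cases v <;> simp [hS] <;> omega
  have hmemL : ∀ i : Fin h, ((Sum.inl i : Fin h ⊕ Fin h), (⟨k - 1, hk1⟩ : Fin k)) ∈ S := by
    intro i; rw [memS]; exact Or.inl ⟨rfl, rfl⟩
  have hmemR : ∀ i : Fin h, ((Sum.inr i : Fin h ⊕ Fin h), (⟨0, hk0⟩ : Fin k)) ∈ S := by
    intro i; rw [memS]; exact Or.inr ⟨rfl, rfl⟩
  refine ⟨⟨⟨fun a => a.1.1, fun v => match v with
    | Sum.inl i => ⟨(Sum.inl i, ⟨k - 1, hk1⟩), hmemL i⟩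
    | Sum.inr i => ⟨(Sum.inr i, ⟨0, hk0⟩), hmemR i⟩, ?_, ?_⟩, ?_⟩⟩
  · rintro ⟨⟨v, p⟩, hmem⟩
    rw [memS] at hmem
    rcases v with i | i
    · simp only []
      have : p.val = k - 1 := by rcases hmem with ⟨-, hp⟩ | ⟨hh, -⟩; exact hp; simp at hh
      exact Subtype.ext (Prod.ext rfl (Fin.ext this.symm))
    · simp only []
      have : p.val = 0 := by rcases hmem with ⟨hh, -⟩ | ⟨-, hp⟩; simp at hh; exact hp
      exact Subtype.ext (Prod.ext rfl (Fin.ext this.symm))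
  · rintro (i | i) <;> rfl
  · rintro ⟨⟨v, p⟩, hv⟩ ⟨⟨w, q⟩, hw⟩
    rw [memS] at hv hw
    simp only [SimpleGraph.comap_adj, Equiv.coe_fn_mk, Function.Embedding.coe_subtype]
    show (bipartitePart h G).Adj v w ↔ (wellCoveredLayered h G k).Adj (v, p) (w, q)
    simp only [bipartitePart, wellCoveredLayered]
    rcases v with i | i <;> rcases w with j | j <;> simp_all <;>
      first
        | omega
        | (exact fun _ => by omega)
        | (rintro ⟨-, -, hl⟩; exact hl)
end

section
/- Let G be a finite simple graph, let x be a vertex of G, and let C be a minimal vertex cover of the induced subgraph G \ N_G[x]. Then C ∪ N_G(x) is a minimal vertex cover of G. Consequently, deg(J(G \ N_G[x])) + |N_G(x)| ≤ deg(J(G)), where deg of the unit ideal (arising when G \ N_G[x] has no edges) is taken to be 0. -/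
open MvPolynomial

section Aux

variable {V : Type*} {K : Type*} [Field K]

open scoped Classical

/-- Membership of a monomial in the ideal generated by two variables. -/
lemma monomial_mem_span_pair {a b : V} (m : V →₀ ℕ) :
    (monomial m (1 : K)) ∈ Ideal.span ({X a, X b} : Set (MvPolynomial V K)) ↔
      m a ≠ 0 ∨ m b ≠ 0 := by
  constructor
  · intro h
    by_contra hcon
    push_neg at hcon
    obtain ⟨ha, hb⟩ := hcon
    rw [Ideal.mem_span_pair] at h
    obtain ⟨u, v, huv⟩ := h
    classical
    set pt : V → K := fun j => if j = a ∨ j = b then 0 else 1 with hpt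
    have := congrArg (eval pt) huv
    rw [eval_monomial] at this
    have hprod : (m.prod fun j e => pt j ^ e) = 1 := by
      apply Finset.prod_eq_one
      intro j hj
      have hja : j ≠ a := fun hja => by
        subst hja; exact (Finsupp.mem_support_iff.mp hj) ha
      have hjb : j ≠ b := fun hjb => by
        subst hjb; exact (Finsupp.mem_support_iff.mp hj) hb
      simp [hpt, hja, hjb]
    rw [hprod] at this
    simp [hpt] at this
  · intro h
    classical
    rcases h with h | h
    · have hsum : Finsupp.single a 1 + (m - Finsupp.single a 1) = m := by
        ext j
        rw [Finsupp.add_apply, Finsupp.tsub_apply]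
        rcases eq_or_ne j a with rfl | hj
        · simp only [Finsupp.single_eq_same]; omega
        · simp [Finsupp.single_eq_of_ne' (Ne.symm hj)]
      have key : monomial m (1 : K) = X a * monomial (m - Finsupp.single a 1) 1 := by
        rw [X, monomial_mul, one_mul, hsum]
      rw [key]
      exact Ideal.mul_mem_right _ _ (Ideal.subset_span (by simp))
    · have hsum : Finsupp.single b 1 + (m - Finsupp.single b 1) = m := by
        ext j
        rw [Finsupp.add_apply, Finsupp.tsub_apply]
        rcases eq_or_ne j b with rfl | hj
        · simp only [Finsupp.single_eq_same]; omega
        · simp [Finsupp.single_eq_of_ne' (Ne.symm hj)]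
      have key : monomial m (1 : K) = X b * monomial (m - Finsupp.single b 1) 1 := by
        rw [X, monomial_mul, one_mul, hsum]
      rw [key]
      exact Ideal.mul_mem_right _ _ (Ideal.subset_span (by simp))

/-- Membership of a monomial in the cover ideal: the support covers every edge. -/
lemma monomial_mem_coverIdeal (H : SimpleGraph V) (m : V →₀ ℕ) :
    (monomial m (1 : K)) ∈ coverIdeal K H ↔
      ∀ a b : V, H.Adj a b → m a ≠ 0 ∨ m b ≠ 0 := by
  unfold coverIdeal
  simp only [Ideal.mem_iInf, monomial_mem_span_pair]
  exact ⟨fun h a b hab => h (a, b) hab, fun h p hp => h p.1 p.2 hp⟩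

lemma sub_single_apply (m : V →₀ ℕ) (i j : V) :
    ((m - Finsupp.single i 1 : V →₀ ℕ)) j = if j = i then m i - 1 else m j := by
  rw [Finsupp.tsub_apply]
  rcases eq_or_ne j i with rfl | hj
  · simp
  · simp [Finsupp.single_eq_of_ne (Ne.symm hj), hj]

/-- A minimal generator of a cover ideal is squarefree. -/
lemma minGen_le_one {H : SimpleGraph V} {m : V →₀ ℕ}
    (hm : IsMinGen (coverIdeal K H) m) (i : V) : m i ≤ 1 := by
  classical
  by_contra hcon
  push_neg at hcon
  apply hm.2 i (by omega)
  rw [monomial_mem_coverIdeal]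
  intro a b hab
  have := (monomial_mem_coverIdeal (K := K) H m).mp hm.1 a b hab
  rcases this with h | h
  · left; rw [sub_single_apply]; split <;> omega
  · right; rw [sub_single_apply]; split <;> omega

/-- The indicator exponent vector of a finite set of vertices. -/
noncomputable def mOf [Fintype V] (C : Set V) : V →₀ ℕ :=
  Finsupp.indicator C.toFinite.toFinset (fun _ _ => 1)

lemma mOf_apply [Fintype V] (C : Set V) (i : V) :
    mOf C i = if i ∈ C then 1 else 0 := by
  classical
  rw [mOf, Finsupp.indicator_apply]
  split_ifs with h1 h2 h2 <;>
    simp_all [Set.Finite.mem_toFinset]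

lemma mdeg_eq_sum [Fintype V] (m : V →₀ ℕ) : mdeg m = ∑ j, m j :=
  Finsupp.sum_fintype _ _ (fun _ => rfl)

lemma mdeg_mOf [Fintype V] (C : Set V) : mdeg (mOf C) = C.ncard := by
  rw [mdeg_eq_sum]
  rw [Finset.sum_congr rfl (fun j _ => mOf_apply C j)]
  have h1 : (∑ j : V, if j ∈ C then 1 else 0) = (Finset.univ.filter (· ∈ C)).card := by
    simp [Finset.sum_boole]
  rw [h1, Set.ncard_eq_toFinset_card C C.toFinite]
  congr 1
  ext j
  simp [Set.Finite.mem_toFinset]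

/-- A minimal vertex cover gives a minimal monomial generator of the cover ideal. -/
lemma minCover_isMinGen [Fintype V] {H : SimpleGraph V} {C : Set V}
    (hC : IsMinVertexCover H C) : IsMinGen (coverIdeal K H) (mOf C) := by
  classical
  constructor
  · rw [monomial_mem_coverIdeal]
    intro a b hab
    rcases hC.1 hab with h | h
    · left; rw [mOf_apply]; simp [h]
    · right; rw [mOf_apply]; simp [h]
  · intro i hi hmem
    rw [mOf_apply] at hi
    have hiC : i ∈ C := by by_contra h; simp [h] at hi
    rw [monomial_mem_coverIdeal] at hmem
    refine hC.2 (C \ {i}) ?_ ?_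
    · exact Set.ssubset_iff_subset_ne.mpr ⟨Set.diff_subset, fun h => by
        have : i ∈ C \ {i} := h.symm ▸ hiC
        simp at this⟩
    · intro a b hab
      have key : ∀ c : V, ((mOf C - Finsupp.single i 1 : V →₀ ℕ) c ≠ 0) → c ∈ C \ {i} := by
        intro c hc
        rw [sub_single_apply] at hc
        simp only [mOf_apply] at hc
        by_cases hci : c = i
        · subst hci; simp [hiC] at hc
        · simp only [if_neg hci] at hc
          refine ⟨?_, hci⟩
          by_contra h; simp [h] at hc
      rcases hmem a b hab with h | h
      · exact Or.inl (key a h)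
      · exact Or.inr (key b h)

/-- The support of a minimal generator of the cover ideal is a minimal vertex cover. -/
lemma minGen_isMinCover {H : SimpleGraph V} {m : V →₀ ℕ}
    (hm : IsMinGen (coverIdeal K H) m) :
    IsMinVertexCover H {i | m i ≠ 0} := by
  classical
  constructor
  · intro a b hab
    exact (monomial_mem_coverIdeal (K := K) H m).mp hm.1 a b hab
  · rintro D hD hDcov
    obtain ⟨v, hvC, hvD⟩ := Set.exists_of_ssubset hD
    apply hm.2 v hvC
    rw [monomial_mem_coverIdeal]
    intro a b hab
    rcases hDcov hab with h | h
    · left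
      have haC : m a ≠ 0 := hD.subset h
      have hav : a ≠ v := fun he => hvD (he ▸ h)
      rw [sub_single_apply]; simp [hav, haC]
    · right
      have hbC : m b ≠ 0 := hD.subset h
      have hbv : b ≠ v := fun he => hvD (he ▸ h)
      rw [sub_single_apply]; simp [hbv, hbC]

/-- A minimal generator of the cover ideal equals the indicator of its support. -/
lemma minGen_eq_mOf [Fintype V] {H : SimpleGraph V} {m : V →₀ ℕ}
    (hm : IsMinGen (coverIdeal K H) m) : m = mOf {i | m i ≠ 0} := by
  ext i
  rw [mOf_apply]
  have := minGen_le_one hm i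
  split_ifs with h
  · simp only [Set.mem_setOf_eq] at h; omega
  · simp only [Set.mem_setOf_eq, not_not] at h; omega

/-- A minimal vertex cover of `G \ A` avoids `A`. -/
lemma minCover_avoids {G : SimpleGraph V} {A C : Set V}
    (hC : IsMinVertexCover (deleteVerts G A) C) : ∀ v ∈ C, v ∉ A := by
  intro v hvC hvA
  apply hC.2 (C \ {v})
  · exact Set.ssubset_iff_subset_ne.mpr ⟨Set.diff_subset, fun h => by
      have : v ∈ C \ {v} := h.symm ▸ hvC
      simp at this⟩
  · rintro a b (⟨hab, haA, hbA⟩ : G.Adj a b ∧ a ∉ A ∧ b ∉ A)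
    rcases hC.1 (⟨hab, haA, hbA⟩ : G.Adj a b ∧ a ∉ A ∧ b ∉ A) with h | h
    · exact Or.inl ⟨h, fun he => haA (he ▸ hvA)⟩
    · exact Or.inr ⟨h, fun he => hbA (he ▸ hvA)⟩

/-- The combinatorial core: a minimal vertex cover of `G \ N[x]` together with `N(x)`
is a minimal vertex cover of `G`. -/
lemma part1 {G : SimpleGraph V} {x : V} {C : Set V}
    (hC : IsMinVertexCover (deleteVerts G (insert x (G.neighborSet x))) C) :
    IsMinVertexCover G (C ∪ G.neighborSet x) := by
  have havoid := minCover_avoids hC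
  constructor
  · intro a b hab
    by_cases haN : a ∈ insert x (G.neighborSet x)
    · rcases haN with rfl | haN
      · exact Or.inr (Or.inr hab)
      · exact Or.inl (Or.inr haN)
    · by_cases hbN : b ∈ insert x (G.neighborSet x)
      · rcases hbN with rfl | hbN
        · exact Or.inl (Or.inr hab.symm)
        · exact Or.inr (Or.inr hbN)
      · rcases hC.1 (⟨hab, haN, hbN⟩ : G.Adj a b ∧ a ∉ _ ∧ b ∉ _) with h | h
        · exact Or.inl (Or.inl h)
        · exact Or.inr (Or.inl h)
  · rintro D hD hDcov
    obtain ⟨v, hvCU, hvD⟩ := Set.exists_of_ssubset hD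
    have hxC : x ∉ C := fun h => havoid x h (Set.mem_insert x _)
    have hxU : x ∉ C ∪ G.neighborSet x := by
      rintro (h | h)
      · exact hxC h
      · exact G.loopless.irrefl x h
    rcases hvCU with hvC | hvN
    · -- v ∈ C : then D ∩ C is a cover of the deleted graph, properly contained in C
      apply hC.2 (D ∩ C)
      · refine Set.ssubset_iff_subset_ne.mpr ⟨Set.inter_subset_right, fun h => ?_⟩
        have : v ∈ D ∩ C := by rw [h]; exact hvC
        exact hvD this.1
      · rintro a b (⟨hab, haN, hbN⟩ : G.Adj a b ∧ a ∉ insert x (G.neighborSet x) ∧ b ∉ insert x (G.neighborSet x))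
        rcases hDcov hab with h | h
        · left
          refine ⟨h, ?_⟩
          rcases hD.subset h with h' | h'
          · exact h'
          · exact absurd (Set.mem_insert_iff.mpr (Or.inr h')) haN
        · right
          refine ⟨h, ?_⟩
          rcases hD.subset h with h' | h'
          · exact h'
          · exact absurd (Set.mem_insert_iff.mpr (Or.inr h')) hbN
    · -- v ∈ N(x) : the edge {x, v} is uncovered by D
      rcases hDcov hvN with h | h
      · exact hxU (hD.subset h)
      · exact hvD h

lemma minGen_mdeg_le [Fintype V] {H : SimpleGraph V} {m : V →₀ ℕ}
    (hm : IsMinGen (coverIdeal K H) m) : mdeg m ≤ Fintype.card V := by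
  rw [mdeg_eq_sum]
  calc ∑ j, m j ≤ ∑ _j : V, 1 := Finset.sum_le_sum fun j _ => minGen_le_one hm j
    _ = Fintype.card V := by simp

end Aux

/-- from the proof of Theorem `deg`: if `C` is a minimal vertex cover of
`G \ N_G[x]`, then `C ∪ N_G(x)` is a minimal vertex cover of `G`; consequently
`deg (J(G \ N_G[x])) + |N_G(x)| ≤ deg (J(G))` (where `deg` of the unit ideal is `0`). -/
theorem statement14 {V : Type*} [Fintype V] (K : Type*) [Field K] (G : SimpleGraph V)
    (x : V) (C : Set V)
    (hC : IsMinVertexCover (deleteVerts G (insert x (G.neighborSet x))) C) :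
    IsMinVertexCover G (C ∪ G.neighborSet x) ∧
    genDeg (coverIdeal K (deleteVerts G (insert x (G.neighborSet x)))) +
        (G.neighborSet x).ncard ≤
      genDeg (coverIdeal K G) := by
  classical
  set A : Set V := insert x (G.neighborSet x) with hA
  set G' := deleteVerts G A with hG'
  refine ⟨part1 hC, ?_⟩
  -- the set of degrees of minimal generators of J(G')
  set S' : Set ℕ := {d : ℕ | ∃ m : V →₀ ℕ, IsMinGen (coverIdeal K G') m ∧ mdeg m = d}
  have hS'ne : S'.Nonempty := ⟨mdeg (mOf C), mOf C, minCover_isMinGen hC, rfl⟩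
  have hS'bdd : BddAbove S' := ⟨Fintype.card V, by
    rintro d ⟨m, hm, rfl⟩; exact minGen_mdeg_le hm⟩
  have hmem : genDeg (coverIdeal K G') ∈ S' := by
    rw [genDeg]
    exact Nat.sSup_mem hS'ne hS'bdd
  obtain ⟨m', hm', hdeg'⟩ := hmem
  set C' : Set V := {i | m' i ≠ 0} with hC'
  have hC'min : IsMinVertexCover G' C' := minGen_isMinCover hm'
  have hC'avoid : ∀ v ∈ C', v ∉ A := minCover_avoids hC'min
  have hUmin : IsMinVertexCover G (C' ∪ G.neighborSet x) := part1 hC'min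
  -- the combined minimal generator
  have hgen : IsMinGen (coverIdeal K G) (mOf (C' ∪ G.neighborSet x)) :=
    minCover_isMinGen hUmin
  have hdisj : Disjoint C' (G.neighborSet x) := by
    rw [Set.disjoint_left]
    intro v hv hvN
    exact hC'avoid v hv (Set.mem_insert_iff.mpr (Or.inr hvN))
  have hcard : mdeg (mOf (C' ∪ G.neighborSet x)) =
      genDeg (coverIdeal K G') + (G.neighborSet x).ncard := by
    rw [mdeg_mOf, Set.ncard_union_eq hdisj C'.toFinite (G.neighborSet x).toFinite]
    congr 1
    have hmd : mdeg m' = C'.ncard := by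
      conv_lhs => rw [minGen_eq_mOf hm']
      rw [mdeg_mOf, ← hC']
    rw [← hdeg', hmd]
  rw [genDeg]
  apply le_csSup
  · exact ⟨Fintype.card V, by rintro d ⟨m, hm, rfl⟩; exact minGen_mdeg_le hm⟩
  · exact ⟨mOf (C' ∪ G.neighborSet x), hgen, hcard⟩
end
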